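/- Let X ∈ ℝ^{n×n}, Y ∈ ℝ^{m×n}, and κ̄ > 0. If the block matrix [[X + Xᵀ - I, Yᵀ], [Y, κ̄² I]] is positive definite, then X is invertible and the matrix K = Y X⁻¹ satisfies ‖K‖ ≤ κ̄ (spectral norm), equivalently Kᵀ K ⪯ κ̄² I. -/

import Mathlib

open Matrix

lemma psd_smul {k : ℕ} {S : Matrix (Fin k) (Fin k) ℝ} (hS : S.PosSemidef) {c : ℝ}
    (hc : 0 ≤ c) : (c • S).PosSemidef := by
  refine .of_dotProduct_mulVec_nonneg ?_ fun x => ?_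
  · show _ = _
    rw [conjTranspose_smul, hS.1.eq]
    simp
  · rw [smul_mulVec, dotProduct_smul, smul_eq_mul]
    exact mul_nonneg hc (hS.dotProduct_mulVec_nonneg x)

/-- If `[[X + Xᵀ - I, Yᵀ], [Y, κ̄² I]] ≻ 0` with `κ̄ > 0`, then `X` is invertible
and `K = Y X⁻¹` satisfies `Kᵀ K ⪯ κ̄² I` (i.e. `‖K‖ ≤ κ̄` in spectral norm). -/
theorem stmt12 (n m : ℕ) (X : Matrix (Fin n) (Fin n) ℝ) (Y : Matrix (Fin m) (Fin n) ℝ)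
    (κ : ℝ) (hκ : 0 < κ)
    (h : (Matrix.fromBlocks (X + Xᵀ - 1) Yᵀ Y (κ ^ 2 • (1 : Matrix (Fin m) (Fin m) ℝ))).PosDef) :
    IsUnit X ∧ (κ ^ 2 • (1 : Matrix (Fin n) (Fin n) ℝ) - (Y * X⁻¹)ᵀ * (Y * X⁻¹)).PosSemidef := by
  have hκ2 : (0:ℝ) < κ ^ 2 := by positivity
  -- A := X + Xᵀ - 1 is positive definite
  have hA : (X + Xᵀ - 1).PosDef := by
    refine Matrix.PosDef.of_dotProduct_mulVec_pos ?_ fun v hv => ?_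
    · show _ = _
      simp [conjTranspose_eq_transpose_of_trivial, transpose_sub, transpose_add]
      abel
    · have := h.dotProduct_mulVec_pos (x := Sum.elim v 0) (by simp [funext_iff] at hv ⊢; tauto)
      simpa [fromBlocks_mulVec, dotProduct] using this
  -- X is a unit
  have hX : IsUnit X := by
    rw [Matrix.isUnit_iff_isUnit_det, isUnit_iff_ne_zero]
    intro hdet
    obtain ⟨v, hv, hXv⟩ := (Matrix.exists_mulVec_eq_zero_iff).2 hdet
    have h1 := hA.dotProduct_mulVec_pos hv
    have h2 : v ⬝ᵥ Xᵀ *ᵥ v = 0 := by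
      rw [Matrix.dotProduct_mulVec, Matrix.vecMul_transpose, hXv, zero_dotProduct]
    simp only [Matrix.sub_mulVec, Matrix.add_mulVec, hXv, Matrix.one_mulVec,
      dotProduct_add, dotProduct_sub, dotProduct_zero, zero_add, star_trivial, h2,
      zero_sub] at h1
    have h3 : (0:ℝ) ≤ v ⬝ᵥ v := Finset.sum_nonneg fun i _ => mul_self_nonneg (v i)
    linarith
  refine ⟨hX, ?_⟩
  have hXdet : IsUnit X.det := (Matrix.isUnit_iff_isUnit_det X).mp hX
  -- D := κ² • 1 is posdef and invertible, with explicit inverse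
  have hD : ((κ^2) • (1 : Matrix (Fin m) (Fin m) ℝ)).PosDef := by
    refine Matrix.PosDef.of_dotProduct_mulVec_pos (by simp [IsHermitian]) fun x hx => ?_
    rw [smul_mulVec, dotProduct_smul, one_mulVec, smul_eq_mul, star_trivial]
    have : 0 < x ⬝ᵥ x := by
      have := Matrix.dotProduct_star_self_pos_iff.mpr hx
      simpa using this
    exact mul_pos hκ2 this
  have hκ2' : κ^2 ≠ 0 := ne_of_gt hκ2
  haveI : Invertible ((κ^2) • (1 : Matrix (Fin m) (Fin m) ℝ)) :=
    ⟨(κ^2)⁻¹ • (1 : Matrix (Fin m) (Fin m) ℝ),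
      by rw [Matrix.smul_mul, Matrix.mul_smul, one_mul, smul_smul, inv_mul_cancel₀ hκ2', one_smul],
      by rw [Matrix.smul_mul, Matrix.mul_smul, one_mul, smul_smul, mul_inv_cancel₀ hκ2', one_smul]⟩
  have hDinv : ((κ^2) • (1 : Matrix (Fin m) (Fin m) ℝ))⁻¹ = (κ^2)⁻¹ • 1 :=
    Matrix.inv_eq_right_inv (by
      rw [Matrix.smul_mul, Matrix.mul_smul, one_mul, smul_smul, mul_inv_cancel₀ hκ2', one_smul])
  -- Schur complement
  have hYY : (Yᵀ)ᴴ = Y := by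
    rw [conjTranspose_eq_transpose_of_trivial, transpose_transpose]
  have hS : ((X + Xᵀ - 1) - Yᵀ * ((κ^2) • (1 : Matrix (Fin m) (Fin m) ℝ))⁻¹ * (Yᵀ)ᴴ).PosSemidef := by
    rw [← Matrix.PosDef.fromBlocks₂₂ _ _ hD]
    rw [hYY]
    exact h.posSemidef
  rw [hDinv, hYY] at hS
  -- κ² XᵀX - YᵀY is PSD
  have hP1 : ((κ • (X - 1))ᴴ * (κ • (X - 1))).PosSemidef := posSemidef_conjTranspose_mul_self _
  have hP2 := psd_smul hS (le_of_lt hκ2)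
  have hsum := hP1.add hP2
  have eL : (κ • (X - 1))ᴴ * (κ • (X - 1))
      = (κ^2) • (Xᵀ * X) - (κ^2) • Xᵀ - (κ^2) • X + (κ^2) • (1 : Matrix (Fin n) (Fin n) ℝ) := by
    rw [conjTranspose_eq_transpose_of_trivial, transpose_smul, transpose_sub, transpose_one,
      Matrix.smul_mul, Matrix.mul_smul, smul_smul, ← pow_two, Matrix.sub_mul,
      Matrix.mul_sub, Matrix.mul_sub, one_mul, mul_one, smul_sub, smul_sub]
    simp only [Matrix.one_mul, Matrix.mul_one, smul_sub, smul_add]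
    abel
  have e0 : Yᵀ * ((κ^2)⁻¹ • (1 : Matrix (Fin m) (Fin m) ℝ)) * Y = (κ^2)⁻¹ • (Yᵀ * Y) := by
    simp [Matrix.mul_smul, Matrix.smul_mul]
  have eR : (κ^2) • ((X + Xᵀ - 1) - Yᵀ * ((κ^2)⁻¹ • (1 : Matrix (Fin m) (Fin m) ℝ)) * Y)
      = (κ^2) • X + (κ^2) • Xᵀ - (κ^2) • (1 : Matrix (Fin n) (Fin n) ℝ) - Yᵀ * Y := by
    rw [e0, smul_sub, smul_sub, smul_add, smul_smul, mul_inv_cancel₀ hκ2', one_smul]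
  have hkey : (κ • (X - 1))ᴴ * (κ • (X - 1))
      + (κ^2) • ((X + Xᵀ - 1) - Yᵀ * ((κ^2)⁻¹ • (1 : Matrix (Fin m) (Fin m) ℝ)) * Y)
      = (κ^2) • (Xᵀ * X) - Yᵀ * Y := by
    rw [eL, eR]; abel
  rw [hkey] at hsum
  -- conjugate by X⁻¹
  have hfinal := hsum.conjTranspose_mul_mul_same X⁻¹
  have e1 : (X⁻¹)ᴴ = X⁻¹ᵀ := conjTranspose_eq_transpose_of_trivial _
  have e2 : X⁻¹ᵀ * Xᵀ = 1 := by
    rw [← transpose_mul, Matrix.mul_nonsing_inv X hXdet, transpose_one]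
  have e3 : X * X⁻¹ = 1 := Matrix.mul_nonsing_inv X hXdet
  have efin : X⁻¹ᵀ * ((κ^2) • (Xᵀ * X) - Yᵀ * Y) * X⁻¹
      = κ ^ 2 • (1 : Matrix (Fin n) (Fin n) ℝ) - (Y * X⁻¹)ᵀ * (Y * X⁻¹) := by
    rw [Matrix.mul_sub, Matrix.sub_mul, Matrix.mul_smul, Matrix.smul_mul, transpose_mul]
    congr 1
    · rw [← Matrix.mul_assoc X⁻¹ᵀ Xᵀ X, e2, one_mul, e3]
    · rw [← Matrix.mul_assoc, ← Matrix.mul_assoc, Matrix.mul_assoc _ Y X⁻¹,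
        Matrix.mul_assoc X⁻¹ᵀ Yᵀ]
  rw [e1, efin] at hfinal
  exact hfinal
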